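/- For every integer n ≥ 2, let G be the graph obtained from the complete graph K_n by subdividing each edge exactly once (replacing each edge uv by a new vertex adjacent to u and v) and then adding one further new vertex adjacent to all other vertices of the resulting graph. Then χ_pcf(G) ≤ 4 and χ_so(G) ≥ n. -/

import Mathlib

/-- The simple graph generated by a relation (symmetrized, loops removed). -/
def graphOfRel {V : Type} (r : V → V → Prop) : SimpleGraph V where
  Adj x y := x ≠ y ∧ (r x y ∨ r y x)
  symm := ⟨fun _ _ h => ⟨h.1.symm, h.2.symm⟩⟩
  loopless := ⟨fun _ h => h.1 rfl⟩

/-- Vertices: the `n` branch vertices of `K_n`, one subdivision vertex for each edge of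
`K_n`, and one extra universal vertex. -/
abbrev SubdivKVertex (n : ℕ) : Type :=
  (Fin n ⊕ {p : Fin n × Fin n // p.1 < p.2}) ⊕ Unit

/-- Each subdivision vertex is joined to the two endpoints of its edge, and the extra
vertex is joined to everything else. -/
def subdivKRel (n : ℕ) : SubdivKVertex n → SubdivKVertex n → Prop
  | Sum.inl (Sum.inl u), Sum.inl (Sum.inr p) => u = p.val.1 ∨ u = p.val.2
  | Sum.inr _, _ => True
  | _, _ => False

/-- `K_n` with every edge subdivided once, plus a universal vertex. -/
def subdivKUniv (n : ℕ) : SimpleGraph (SubdivKVertex n) :=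
  graphOfRel (subdivKRel n)

/-- `G` has a proper conflict-free coloring with `k` colors. -/
def HasPCFColoring {V : Type} (G : SimpleGraph V) (k : ℕ) : Prop :=
  ∃ c : V → Fin k, (∀ u v : V, G.Adj u v → c u ≠ c v) ∧
    ∀ v : V, (G.neighborSet v).Nonempty →
      ∃ i : Fin k, {u | u ∈ G.neighborSet v ∧ c u = i}.ncard = 1

/-- `G` has a strong odd coloring with `k` colors. -/
def HasStrongOddColoring {V : Type} (G : SimpleGraph V) (k : ℕ) : Prop :=
  ∃ c : V → Fin k, (∀ u v : V, G.Adj u v → c u ≠ c v) ∧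
    ∀ v : V, (G.neighborSet v).Nonempty →
      ∀ i : Fin k, {u | u ∈ G.neighborSet v ∧ c u = i}.Nonempty →
        Odd {u | u ∈ G.neighborSet v ∧ c u = i}.ncard

/-- The 4-coloring used for the PCF part. -/
def pcfCol (n : ℕ) : SubdivKVertex n → Fin 4
  | Sum.inl (Sum.inl u) => if (u : ℕ) = 0 then 3 else 1
  | Sum.inl (Sum.inr _) => 2
  | Sum.inr _ => 0

lemma subdivK_adj (n : ℕ) (x y : SubdivKVertex n) :
    (subdivKUniv n).Adj x y ↔ x ≠ y ∧ (subdivKRel n x y ∨ subdivKRel n y x) :=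
  Iff.rfl

lemma pcfCol_branch_ne_zero (n : ℕ) (u : Fin n) :
    ¬ pcfCol n (Sum.inl (Sum.inl u)) = 0 := by
  simp only [pcfCol]; split_ifs <;> decide

lemma pcfCol_sub_ne_zero (n : ℕ) (p : {p : Fin n × Fin n // p.1 < p.2}) :
    ¬ pcfCol n (Sum.inl (Sum.inr p)) = 0 := by simp only [pcfCol]; decide

lemma pcfCol_sub_ne_three (n : ℕ) (p : {p : Fin n × Fin n // p.1 < p.2}) :
    ¬ pcfCol n (Sum.inl (Sum.inr p)) = 3 := by simp only [pcfCol]; decide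

lemma pcfCol_univ_ne_three (n : ℕ) (z : Unit) :
    ¬ pcfCol n (Sum.inr z) = 3 := by simp only [pcfCol]; decide

lemma pcfCol_branch_eq_three (n : ℕ) (u : Fin n) :
    pcfCol n (Sum.inl (Sum.inl u)) = 3 ↔ (u : ℕ) = 0 := by
  simp only [pcfCol]; split_ifs with h <;> simp [h]

/-- For the graph obtained from `K_n` by subdividing every edge once and adding a universal
vertex, `χ_pcf ≤ 4` and `χ_so ≥ n`. -/
theorem subdivided_clique_universal_pcf_strongOdd (n : ℕ) (hn : 2 ≤ n) :
    HasPCFColoring (subdivKUniv n) 4 ∧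
      ∀ k : ℕ, HasStrongOddColoring (subdivKUniv n) k → n ≤ k := by
  constructor
  · -- PCF with 4 colors
    refine ⟨pcfCol n, ?_, ?_⟩
    · rintro ((u | p) | ⟨⟩) ((v | q) | ⟨⟩) ⟨hne, hr⟩ <;>
        first
          | (simp only [pcfCol]; split_ifs <;> decide)
          | (simp only [pcfCol]; decide)
          | (exact absurd (congrArg Sum.inr (Subsingleton.elim _ _)) hne)
          | (simp [subdivKRel] at hr)
    · rintro ((u | p) | ⟨⟩) _
      · -- branch vertex: the universal vertex is the unique 0-colored neighbor
        refine ⟨0, ?_⟩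
        have hs : {x | x ∈ (subdivKUniv n).neighborSet (Sum.inl (Sum.inl u)) ∧
            pcfCol n x = 0} = {Sum.inr ()} := by
          ext ((v | q) | ⟨⟩)
          · simp [pcfCol_branch_ne_zero]
          · simp [pcfCol_sub_ne_zero]
          · simp [SimpleGraph.neighborSet, subdivK_adj, subdivKRel, pcfCol]
        rw [hs, Set.ncard_singleton]
      · refine ⟨0, ?_⟩
        have hs : {x | x ∈ (subdivKUniv n).neighborSet (Sum.inl (Sum.inr p)) ∧
            pcfCol n x = 0} = {Sum.inr ()} := by
          ext ((v | q) | ⟨⟩)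
          · simp [pcfCol_branch_ne_zero]
          · simp [pcfCol_sub_ne_zero]
          · simp [SimpleGraph.neighborSet, subdivK_adj, subdivKRel, pcfCol]
        rw [hs, Set.ncard_singleton]
      · -- universal vertex: branch 0 is the unique 3-colored neighbor
        refine ⟨3, ?_⟩
        have h0 : 0 < n := by omega
        have hs : {x | x ∈ (subdivKUniv n).neighborSet (Sum.inr ()) ∧ pcfCol n x = 3}
            = {Sum.inl (Sum.inl ⟨0, h0⟩)} := by
          ext ((v | q) | ⟨⟩)
          · simp only [Set.mem_setOf_eq, Set.mem_singleton_iff, Sum.inl.injEq]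
            constructor
            · rintro ⟨-, h3⟩
              rw [pcfCol_branch_eq_three] at h3
              exact Fin.ext h3
            · rintro rfl
              exact ⟨⟨by simp, Or.inl trivial⟩, by rw [pcfCol_branch_eq_three]⟩
          · simp [pcfCol_sub_ne_three]
          · simp [pcfCol_univ_ne_three]
        rw [hs, Set.ncard_singleton]
  · rintro k ⟨c, hprop, hodd⟩
    have key : ∀ u v : Fin n, u < v →
        c (Sum.inl (Sum.inl u)) ≠ c (Sum.inl (Sum.inl v)) := by
      intro u v hlt hc
      set p : {p : Fin n × Fin n // p.1 < p.2} := ⟨(u, v), hlt⟩ with hp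
      have hadj_u : (subdivKUniv n).Adj (Sum.inl (Sum.inr p)) (Sum.inl (Sum.inl u)) :=
        ⟨by simp, Or.inr (Or.inl rfl)⟩
      have hadj_v : (subdivKUniv n).Adj (Sum.inl (Sum.inr p)) (Sum.inl (Sum.inl v)) :=
        ⟨by simp, Or.inr (Or.inr rfl)⟩
      have hadj_w : (subdivKUniv n).Adj (Sum.inr ()) (Sum.inl (Sum.inl u)) :=
        ⟨by simp, Or.inl trivial⟩
      have hcw : c (Sum.inr ()) ≠ c (Sum.inl (Sum.inl u)) := hprop _ _ hadj_w
      have hset : {x | x ∈ (subdivKUniv n).neighborSet (Sum.inl (Sum.inr p)) ∧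
          c x = c (Sum.inl (Sum.inl u))}
          = {Sum.inl (Sum.inl u), Sum.inl (Sum.inl v)} := by
        ext x
        simp only [Set.mem_setOf_eq, Set.mem_insert_iff, Set.mem_singleton_iff]
        constructor
        · rintro ⟨⟨hne', hF | hr⟩, hcx⟩
          · rcases x with (x | q) | z <;> simp [subdivKRel] at hF
          · rcases x with (x | q) | z
            · rcases hr with h | h
              · left; simp only [hp] at h; simp [h]
              · right; simp only [hp] at h; simp [h]
            · simp [subdivKRel] at hr
            · cases z; exact absurd hcx hcw
        · rintro (rfl | rfl)
          · exact ⟨hadj_u, rfl⟩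
          · exact ⟨hadj_v, hc.symm⟩
      have hmem : Sum.inl (Sum.inl u) ∈
          {x | x ∈ (subdivKUniv n).neighborSet (Sum.inl (Sum.inr p)) ∧
            c x = c (Sum.inl (Sum.inl u))} := ⟨hadj_u, rfl⟩
      have hodd2 := hodd _ ⟨_, hadj_u⟩ (c (Sum.inl (Sum.inl u))) ⟨_, hmem⟩
      have hne2 : (Sum.inl (Sum.inl u) : SubdivKVertex n) ≠ Sum.inl (Sum.inl v) := by
        intro h
        rw [Sum.inl.injEq, Sum.inl.injEq] at h
        exact absurd h hlt.ne
      rw [hset, Set.ncard_pair hne2] at hodd2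
      simp [Nat.odd_iff] at hodd2
    have hinj : Function.Injective (fun u : Fin n => c (Sum.inl (Sum.inl u))) := by
      intro u v hc
      by_contra hne
      rcases lt_or_gt_of_ne hne with h | h
      · exact key u v h hc
      · exact key v u h hc.symm
    calc n = Fintype.card (Fin n) := (Fintype.card_fin n).symm
      _ ≤ Fintype.card (Fin k) := Fintype.card_le_of_injective _ hinj
      _ = k := Fintype.card_fin k
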